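/- Let m ≥ n ≥ 1, let p ∈ [1,∞) be a real number, and let τ > 0. Let c_1, …, c_n ∈ ℝ^m be linearly independent vectors whose Gram–Schmidt orthogonalization satisfies the LLL reducedness conditions: |μ_{ij}| ≤ 1/2 for all 1 ≤ j < i ≤ n, and ‖c*_i‖₂² ≥ ½‖c*_{i−1}‖₂² for all 1 < i ≤ n. Let t′ ∈ ℝ^m be such that for every i the coefficient x*_i = ⟨t′, c*_i⟩/⟨c*_i, c*_i⟩ lies in (−1/2, 1/2]. Let v ∈ ℝ^m be a lattice vector (v = Σ_i z_i c_i with z ∈ ℤ^n) satisfying ‖v − t′‖_p ≤ τ · ‖c_1‖_p, and write v = Σ_{i=1}^n y_i c*_i with y_i ∈ ℝ. Then for every i ∈ {1,…,n}, |y_i| ≤ τ · m · 2^{(i−1)/2} + 1/2. -/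

import Mathlib

open scoped RealInnerProductSpace

/-- The Gram–Schmidt orthogonalization of a family of vectors indexed by `Fin n`
(instances given explicitly to aid elaboration). -/
noncomputable def gso {m n : ℕ} (c : Fin n → EuclideanSpace ℝ (Fin m)) :
    Fin n → EuclideanSpace ℝ (Fin m) :=
  @InnerProductSpace.gramSchmidt ℝ _ _ _ _ (Fin n) Fin.instLinearOrder (Fin.instLocallyFiniteOrderBot n)
    IsWellOrder.toIsWellFounded c

/-- The `ℓ_p` norm `(∑ i, |x i|^p)^{1/p}` of a vector `x ∈ ℝ^m`, for a real `p`. -/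
noncomputable def lpNorm' {m : ℕ} (p : ℝ) (x : EuclideanSpace ℝ (Fin m)) : ℝ :=
  (∑ i, |x i| ^ p) ^ (1 / p)

lemma gso_orthogonal {m n : ℕ} (c : Fin n → EuclideanSpace ℝ (Fin m)) {i j : Fin n}
    (h : i ≠ j) : ⟪gso c i, gso c j⟫ = 0 :=
  @InnerProductSpace.gramSchmidt_orthogonal ℝ _ _ _ _ (Fin n) Fin.instLinearOrder (Fin.instLocallyFiniteOrderBot n)
    IsWellOrder.toIsWellFounded c i j h

lemma gso_ne_zero {m n : ℕ} {c : Fin n → EuclideanSpace ℝ (Fin m)}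
    (hc : LinearIndependent ℝ c) (i : Fin n) : gso c i ≠ 0 :=
  @InnerProductSpace.gramSchmidt_ne_zero ℝ _ _ _ _ (Fin n) Fin.instLinearOrder (Fin.instLocallyFiniteOrderBot n)
    IsWellOrder.toIsWellFounded c i hc

lemma gso_zero {m n : ℕ} (hn : 1 ≤ n) (c : Fin n → EuclideanSpace ℝ (Fin m)) :
    gso c ⟨0, hn⟩ = c ⟨0, hn⟩ := by
  unfold gso
  rw [InnerProductSpace.gramSchmidt_def]
  have : Finset.Iio (⟨0, hn⟩ : Fin n) = ∅ := by
    ext x; simp [Fin.lt_def]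
  simp [this]

lemma sum_rpow_le_rpow_sum {ι : Type*} (s : Finset ι) (f : ι → ℝ) (hf : ∀ i, 0 ≤ f i)
    {p : ℝ} (hp : 1 ≤ p) : ∑ i ∈ s, f i ^ p ≤ (∑ i ∈ s, f i) ^ p := by
  classical
  induction s using Finset.induction with
  | empty => simp [Real.zero_rpow (by positivity : p ≠ 0)]
  | insert _ _ hx ih =>
    rename_i a s
    rw [Finset.sum_insert hx, Finset.sum_insert hx]
    calc f a ^ p + ∑ i ∈ s, f i ^ p ≤ f a ^ p + (∑ i ∈ s, f i) ^ p := by linarith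
    _ ≤ (f a + ∑ i ∈ s, f i) ^ p := by
        have h0 : 0 ≤ ∑ i ∈ s, f i := Finset.sum_nonneg fun i _ => hf i
        have := NNReal.add_rpow_le_rpow_add ⟨f a, hf a⟩ ⟨_, h0⟩ hp
        have := NNReal.coe_le_coe.2 this
        push_cast [NNReal.coe_rpow] at this
        convert this using 2 <;> rfl

lemma lpNorm'_nonneg {m : ℕ} (p : ℝ) (x : EuclideanSpace ℝ (Fin m)) : 0 ≤ lpNorm' p x := by
  unfold lpNorm'
  positivity

lemma coord_le_lpNorm' {m : ℕ} {p : ℝ} (hp : 1 ≤ p) (x : EuclideanSpace ℝ (Fin m)) (i : Fin m) :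
    |x i| ≤ lpNorm' p x := by
  have hp0 : p ≠ 0 := by positivity
  have h1 : |x i| ^ p ≤ ∑ j, |x j| ^ p :=
    Finset.single_le_sum (f := fun j => |x j| ^ p) (fun j _ => by positivity)
      (Finset.mem_univ i)
  have h2 : (|x i| ^ p) ^ (1 / p) ≤ (∑ j, |x j| ^ p) ^ (1 / p) :=
    Real.rpow_le_rpow (by positivity) h1 (by positivity)
  rwa [← Real.rpow_mul (abs_nonneg _), mul_one_div, div_self hp0, Real.rpow_one] at h2

lemma l2_le_lpNorm' {m : ℕ} {p : ℝ} (hp : 1 ≤ p) (x : EuclideanSpace ℝ (Fin m)) :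
    ‖x‖ ≤ Real.sqrt m * lpNorm' p x := by
  have hL := lpNorm'_nonneg p x
  have hb : ∀ i : Fin m, |x i| ≤ lpNorm' p x := coord_le_lpNorm' hp x
  rw [EuclideanSpace.norm_eq]
  have : ∑ i, ‖x i‖ ^ 2 ≤ (m : ℝ) * lpNorm' p x ^ 2 := by
    calc ∑ i, ‖x i‖ ^ 2 ≤ ∑ _i : Fin m, lpNorm' p x ^ 2 := by
          apply Finset.sum_le_sum
          intro i _
          rw [Real.norm_eq_abs]
          exact pow_le_pow_left₀ (abs_nonneg _) (hb i) 2
      _ = (m : ℝ) * lpNorm' p x ^ 2 := by simp [mul_comm]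
  calc Real.sqrt (∑ i, ‖x i‖ ^ 2) ≤ Real.sqrt ((m : ℝ) * lpNorm' p x ^ 2) :=
        Real.sqrt_le_sqrt this
    _ = Real.sqrt m * lpNorm' p x := by
        rw [Real.sqrt_mul (Nat.cast_nonneg m), Real.sqrt_sq hL]

lemma lpNorm'_le_l2 {m : ℕ} {p : ℝ} (hp : 1 ≤ p) (x : EuclideanSpace ℝ (Fin m)) :
    lpNorm' p x ≤ Real.sqrt m * ‖x‖ := by
  have hp0 : p ≠ 0 := by positivity
  have h1 : lpNorm' p x ≤ ∑ i, |x i| := by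
    unfold lpNorm'
    have hs : ∑ i, |x i| ^ p ≤ (∑ i, |x i|) ^ p :=
      sum_rpow_le_rpow_sum _ _ (fun i => abs_nonneg _) hp
    calc (∑ i, |x i| ^ p) ^ (1 / p) ≤ ((∑ i, |x i|) ^ p) ^ (1 / p) :=
          Real.rpow_le_rpow (Finset.sum_nonneg fun i _ => by positivity) hs (by positivity)
      _ = ∑ i, |x i| := by
          rw [← Real.rpow_mul (Finset.sum_nonneg fun i _ => abs_nonneg _), mul_one_div,
            div_self hp0, Real.rpow_one]
  have h2 : ∑ i, |x i| ≤ Real.sqrt m * ‖x‖ := by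
    have hsq : (∑ i, |x i|) ^ 2 ≤ (m : ℝ) * ∑ i, |x i| ^ 2 := by
      have := sq_sum_le_card_mul_sum_sq (s := (Finset.univ : Finset (Fin m)))
        (f := fun i => |x i|)
      simpa using this
    have hnorm : ‖x‖ ^ 2 = ∑ i, |x i| ^ 2 := by
      rw [EuclideanSpace.norm_eq, Real.sq_sqrt (Finset.sum_nonneg fun i _ => by positivity)]
      simp [Real.norm_eq_abs]
    have hsum0 : 0 ≤ ∑ i, |x i| := Finset.sum_nonneg fun i _ => abs_nonneg _
    nlinarith [Real.sq_sqrt (Nat.cast_nonneg m : (0:ℝ) ≤ m), Real.sqrt_nonneg (m : ℝ),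
      norm_nonneg x, mul_nonneg (Real.sqrt_nonneg (m : ℝ)) (norm_nonneg x)]
  linarith

/-- Let `p ∈ [1,∞)`, `τ > 0`, and let `c_1, …, c_n ∈ ℝ^m` be linearly independent
with LLL-reduced Gram–Schmidt data, and let `t'` have all Gram–Schmidt coefficients in
`(−1/2, 1/2]`. If a lattice vector `v = ∑ z_i c_i` satisfies `‖v − t'‖_p ≤ τ·‖c_1‖_p` and
`v = ∑ y_i c*_i` in Gram–Schmidt coordinates, then `|y_i| ≤ τ·m·2^{(i−1)/2} + 1/2`
for every `i` (1-based; here the index `i : Fin n` is 0-based, so the exponent is `i/2`). -/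
theorem stmt_8 (m n : ℕ) (hn : 1 ≤ n) (hmn : n ≤ m)
    (p : ℝ) (hp : 1 ≤ p) (τ : ℝ) (hτ : 0 < τ)
    (c : Fin n → EuclideanSpace ℝ (Fin m)) (hc : LinearIndependent ℝ c)
    (hμ : ∀ i j : Fin n, j < i →
      abs (⟪c i, gso c j⟫ / ⟪gso c j, gso c j⟫) ≤ 1 / 2)
    (hred : ∀ i j : Fin n, (j : ℕ) + 1 = (i : ℕ) →
      ‖gso c i‖ ^ 2 ≥ (1 / 2) * ‖gso c j‖ ^ 2)
    (t' : EuclideanSpace ℝ (Fin m))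
    (ht' : ∀ i : Fin n,
      ⟪t', gso c i⟫ / ⟪gso c i, gso c i⟫ ∈ Set.Ioc (-(1/2) : ℝ) (1/2))
    (v : EuclideanSpace ℝ (Fin m)) (z : Fin n → ℤ) (y : Fin n → ℝ)
    (hvz : v = ∑ i, (z i : ℝ) • c i)
    (hvy : v = ∑ i, y i • gso c i)
    (hdist : lpNorm' p (v - t') ≤ τ * lpNorm' p (c ⟨0, hn⟩)) :
    ∀ i : Fin n, |y i| ≤ τ * m * 2 ^ ((i : ℝ) / 2) + 1 / 2 := by
  intro i
  set g : Fin n → EuclideanSpace ℝ (Fin m) := gso c with hg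
  have hGpos : ∀ j, (0:ℝ) < ‖g j‖ := fun j => norm_pos_iff.2 (gso_ne_zero hc j)
  have hself : ∀ j, ⟪g j, g j⟫ = ‖g j‖ ^ 2 := fun j => real_inner_self_eq_norm_sq (g j)
  -- y i in terms of inner products
  have hy : ⟪v, g i⟫ = y i * ‖g i‖ ^ 2 := by
    rw [hvy, sum_inner]
    rw [Finset.sum_eq_single i]
    · rw [real_inner_smul_left, hself]
    · intro j _ hj
      rw [real_inner_smul_left, gso_orthogonal c hj, mul_zero]
    · intro h; exact absurd (Finset.mem_univ i) h
  set x0 : ℝ := ⟪t', g i⟫ / ⟪g i, g i⟫ with hx0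
  have hx0half : |x0| ≤ 1 / 2 := by
    obtain ⟨h1, h2⟩ := ht' i
    exact abs_le.2 ⟨le_of_lt h1, h2⟩
  have hGsq : ⟪g i, g i⟫ = ‖g i‖ ^ 2 := hself i
  have hGne : (‖g i‖ : ℝ) ^ 2 ≠ 0 := pow_ne_zero 2 (ne_of_gt (hGpos i))
  have hyx : y i - x0 = ⟪v - t', g i⟫ / ‖g i‖ ^ 2 := by
    rw [inner_sub_left, hy, hx0, hGsq]
    field_simp
    rw [sub_div, mul_div_cancel_right₀ _ hGne]
  -- bound on |y i - x0|
  have hcs : |⟪v - t', g i⟫| ≤ ‖v - t'‖ * ‖g i‖ := abs_real_inner_le_norm _ _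
  have hdiff : |y i - x0| ≤ ‖v - t'‖ / ‖g i‖ := by
    rw [hyx, abs_div, abs_of_nonneg (by positivity : (0:ℝ) ≤ ‖g i‖ ^ 2)]
    rw [div_le_div_iff₀ (by positivity) (hGpos i)]
    calc |⟪v - t', g i⟫| * ‖g i‖ ≤ ‖v - t'‖ * ‖g i‖ * ‖g i‖ :=
          mul_le_mul_of_nonneg_right hcs (norm_nonneg _)
      _ = ‖v - t'‖ * ‖g i‖ ^ 2 := by ring
  -- ℓ2-norm bound via ℓp
  have hc0 : g ⟨0, hn⟩ = c ⟨0, hn⟩ := gso_zero hn c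
  have hnorm2 : ‖v - t'‖ ≤ τ * m * ‖g ⟨0, hn⟩‖ := by
    have h1 : ‖v - t'‖ ≤ Real.sqrt m * lpNorm' p (v - t') := l2_le_lpNorm' hp _
    have h2 : lpNorm' p (c ⟨0, hn⟩) ≤ Real.sqrt m * ‖c ⟨0, hn⟩‖ := lpNorm'_le_l2 hp _
    have hs : (0:ℝ) ≤ Real.sqrt m := Real.sqrt_nonneg _
    have hsq : Real.sqrt m * Real.sqrt m = (m : ℝ) :=
      Real.mul_self_sqrt (Nat.cast_nonneg m)
    rw [hc0]
    calc ‖v - t'‖ ≤ Real.sqrt m * lpNorm' p (v - t') := h1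
      _ ≤ Real.sqrt m * (τ * lpNorm' p (c ⟨0, hn⟩)) :=
          mul_le_mul_of_nonneg_left hdist hs
      _ ≤ Real.sqrt m * (τ * (Real.sqrt m * ‖c ⟨0, hn⟩‖)) := by
          apply mul_le_mul_of_nonneg_left _ hs
          exact mul_le_mul_of_nonneg_left h2 (le_of_lt hτ)
      _ = (Real.sqrt m * Real.sqrt m) * (τ * ‖c ⟨0, hn⟩‖) := by ring
      _ = τ * m * ‖c ⟨0, hn⟩‖ := by rw [hsq]; ring
  -- geometric growth bound: ‖g 0‖² ≤ 2^k ‖g k‖²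
  have key : ∀ k (hk : k < n), ‖g ⟨0, hn⟩‖ ^ 2 ≤ 2 ^ k * ‖g ⟨k, hk⟩‖ ^ 2 := by
    intro k
    induction k with
    | zero => intro hk; simp
    | succ k ih =>
      intro hk
      have hk' : k < n := Nat.lt_of_succ_lt hk
      have hstep := hred ⟨k + 1, hk⟩ ⟨k, hk'⟩ rfl
      have h2k : (0:ℝ) ≤ 2 ^ k := by positivity
      have h1 : ‖g ⟨k, hk'⟩‖ ^ 2 ≤ 2 * ‖g ⟨k + 1, hk⟩‖ ^ 2 := by
        have := hstep
        linarith
      have h2 : (2:ℝ) ^ k * ‖g ⟨k, hk'⟩‖ ^ 2 ≤ 2 ^ k * (2 * ‖g ⟨k + 1, hk⟩‖ ^ 2) :=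
        mul_le_mul_of_nonneg_left h1 h2k
      calc ‖g ⟨0, hn⟩‖ ^ 2 ≤ 2 ^ k * ‖g ⟨k, hk'⟩‖ ^ 2 := ih hk'
        _ ≤ 2 ^ k * (2 * ‖g ⟨k + 1, hk⟩‖ ^ 2) := h2
        _ = 2 ^ (k + 1) * ‖g ⟨k + 1, hk⟩‖ ^ 2 := by ring
  have hkey := key i.1 i.2
  have hii : (⟨i.1, i.2⟩ : Fin n) = i := rfl
  rw [hii] at hkey
  -- ‖g 0‖ ≤ 2^{i/2} ‖g i‖
  set E : ℝ := 2 ^ ((i : ℝ) / 2) with hE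
  have hEpos : (0:ℝ) < E := Real.rpow_pos_of_pos (by norm_num) _
  have hEsq : E ^ 2 = (2:ℝ) ^ (i : ℕ) := by
    rw [hE, ← Real.rpow_natCast (2 ^ ((i : ℝ) / 2)) 2, ← Real.rpow_mul (by norm_num : (0:ℝ) ≤ 2),
      show ((i : ℝ) / 2 * ((2:ℕ):ℝ)) = ((i : ℕ) : ℝ) by push_cast; ring,
      Real.rpow_natCast]
  have hg0 : ‖g ⟨0, hn⟩‖ ≤ E * ‖g i‖ := by
    have h4 : ‖g ⟨0, hn⟩‖ ^ 2 ≤ (E * ‖g i‖) ^ 2 := by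
      rw [mul_pow, hEsq]; exact hkey
    calc ‖g ⟨0, hn⟩‖ = Real.sqrt (‖g ⟨0, hn⟩‖ ^ 2) := (Real.sqrt_sq (norm_nonneg _)).symm
      _ ≤ Real.sqrt ((E * ‖g i‖) ^ 2) := Real.sqrt_le_sqrt h4
      _ = E * ‖g i‖ := Real.sqrt_sq (by positivity)
  -- assemble
  have hfinal : ‖v - t'‖ / ‖g i‖ ≤ τ * m * E := by
    rw [div_le_iff₀ (hGpos i)]
    calc ‖v - t'‖ ≤ τ * m * ‖g ⟨0, hn⟩‖ := hnorm2
      _ ≤ τ * m * (E * ‖g i‖) := by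
          apply mul_le_mul_of_nonneg_left hg0
          positivity
      _ = τ * m * E * ‖g i‖ := by ring
  have habs : |y i| ≤ |y i - x0| + |x0| := by
    calc |y i| = |(y i - x0) + x0| := by congr 1; ring
      _ ≤ |y i - x0| + |x0| := abs_add_le _ _
  linarith
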